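/- Let ℓ≥3 be an integer, {J,K} ∈ P•(ℓ), a ∈ J, and b,c,d ∈ K distinct. Then in R_{[ℓ]} one has the identity F_J(R^{{nd}⊔K}_{(nd)bcd}) − R^{[ℓ]}_{abcd} = − Σ_{{J',K'}∈P•(ℓ): a,b∈J', c,d∈K', {J,K}⋂̸{J',K'}} D_{J',K'} + Σ_{{J',K'}∈P•(ℓ): a,c∈J', b,d∈K', {J,K}⋂̸{J',K'}} D_{J',K'}. -/

import Mathlib

open MvPolynomial Finset TensorProduct

noncomputable section

/-- `[ℓ] = {1, …, ℓ}`. -/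
abbrev Iset (n : ℕ) : Finset ℕ := Finset.Icc 1 n

/-! ### The "complex" rings `R_S = R[(D_{J,K})_{{J,K} ∈ P•(S)}]`.
An unordered pair `{J,K}` with `J ⊔ K = S` and `2 ≤ |J| ≤ |S|-2` is represented by
its unique member containing `min S`. -/

/-- Index type for the variables `D_{J,K}`, `{J,K} ∈ P•(S)`: the canonical member
of the pair is the one whose minimum is `min S`. -/
abbrev CxIdx (S : Finset ℕ) : Type :=
  {J : Finset ℕ // J ⊆ S ∧ 2 ≤ J.card ∧ 2 ≤ (S \ J).card ∧ J.min = S.min}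

/-- The polynomial ring `R_S` on the variables `D_{J,K}`, `{J,K} ∈ P•(S)`. -/
abbrev CxRing (R : Type) [CommRing R] (S : Finset ℕ) : Type := MvPolynomial (CxIdx S) R

def cxXv (R : Type) [CommRing R] (S J : Finset ℕ) : CxRing R S :=
  if h : J ⊆ S ∧ 2 ≤ J.card ∧ 2 ≤ (S \ J).card ∧ J.min = S.min then X ⟨J, h⟩ else 0

/-- The variable `D_{J,K}` of `R_S` (equal to `0` if `{J,K} ∉ P•(S)`). -/
def cxD (R : Type) [CommRing R] (S J K : Finset ℕ) : CxRing R S :=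
  if Disjoint J K ∧ J ∪ K = S then (if J.min ≤ K.min then cxXv R S J else cxXv R S K)
  else 0

/-- `{J,K} ⋂̸ {J',K'}`:  `J ⊄ J'`, `J ⊄ K'`, `J' ⊄ J` and `K' ⊄ J`. -/
abbrev NcapCx (J J' K' : Finset ℕ) : Prop :=
  ¬ J ⊆ J' ∧ ¬ J ⊆ K' ∧ ¬ J' ⊆ J ∧ ¬ K' ⊆ J

/-- The element `R^S_{abcd}`. -/
def cxRel (R : Type) [CommRing R] (S : Finset ℕ) (a b c d : ℕ) : CxRing R S :=
  (∑ J ∈ S.powerset,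
    if 2 ≤ J.card ∧ 2 ≤ (S \ J).card ∧ a ∈ J ∧ b ∈ J ∧ c ∈ S \ J ∧ d ∈ S \ J
    then cxD R S J (S \ J) else 0)
  - ∑ J ∈ S.powerset,
    if 2 ≤ J.card ∧ 2 ≤ (S \ J).card ∧ a ∈ J ∧ c ∈ J ∧ b ∈ S \ J ∧ d ∈ S \ J
    then cxD R S J (S \ J) else 0

/-- The ideal `I_S ⊂ R_S`. -/
def cxIdeal (R : Type) [CommRing R] (S : Finset ℕ) : Ideal (CxRing R S) :=
  Ideal.span (
    {x | ∃ J K J' K' : Finset ℕ,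
      (Disjoint J K ∧ J ∪ K = S ∧ 2 ≤ J.card ∧ 2 ≤ K.card) ∧
      (Disjoint J' K' ∧ J' ∪ K' = S ∧ 2 ≤ J'.card ∧ 2 ≤ K'.card) ∧
      NcapCx J J' K' ∧ x = cxD R S J K * cxD R S J' K'} ∪
    {x | ∃ a b c d : ℕ, a ∈ S ∧ b ∈ S ∧ c ∈ S ∧ d ∈ S ∧ a ≠ b ∧ c ≠ d ∧
      x = cxRel R S a b c d})

/-- The homomorphism `F : R_{[ℓ]} → R_{[ℓ+1]}`, `D_{J,K} ↦ D_{J∪{ℓ+1},K} + D_{J,K∪{ℓ+1}}`. -/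
def Fcx (R : Type) [CommRing R] (ℓ : ℕ) : CxRing R (Iset ℓ) →ₐ[R] CxRing R (Iset (ℓ + 1)) :=
  aeval fun i =>
    cxD R (Iset (ℓ + 1)) (i.1 ∪ {ℓ + 1}) (Iset ℓ \ i.1)
    + cxD R (Iset (ℓ + 1)) i.1 ((Iset ℓ \ i.1) ∪ {ℓ + 1})

/-- The homomorphism `F_P : R_{{nd}⊔B} → R_{[ℓ]}`, `D_{J',K'} ↦ D_{P∪(J'-{nd}),K'}` for
`nd ∈ J'`; here `nd = 0`. -/
def FJcx (R : Type) [CommRing R] (ℓ : ℕ) (P B : Finset ℕ) :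
    CxRing R (insert 0 B) →ₐ[R] CxRing R (Iset ℓ) :=
  aeval fun i => cxD R (Iset ℓ) (P ∪ i.1.erase 0) (insert 0 B \ i.1)

/-- The homomorphism `F_{J,K} : R_{{nd}⊔J} ⊗ R_{{nd}⊔K} → R_{[ℓ]}` acting by `F_K` on the
first factor and by `F_J` on the second. -/
def FJKcx (R : Type) [CommRing R] (ℓ : ℕ) (J K : Finset ℕ) :
    TensorProduct R (CxRing R (insert 0 J)) (CxRing R (insert 0 K)) →ₐ[R] CxRing R (Iset ℓ) :=
  Algebra.TensorProduct.productMap (FJcx R ℓ K J) (FJcx R ℓ J K)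

/-- The submodule `A ⊗ I_B + I_A ⊗ B` of `A ⊗_R B`. -/
def mixedSub (R : Type) [CommRing R] {A B : Type} [CommRing A] [CommRing B]
    [Algebra R A] [Algebra R B] (IA : Ideal A) (IB : Ideal B) :
    Submodule R (TensorProduct R A B) :=
  Submodule.span R
    ({x | ∃ p q, q ∈ IB ∧ x = p ⊗ₜ[R] q} ∪ {x | ∃ p q, p ∈ IA ∧ x = p ⊗ₜ[R] q})

/-! ### The "real" rings `R_{0,S}` with variables `ℝE_{J,K}`, `{J,K} ∈ P(S)`, and
`ℝD_{I;J,K}`, `(I,{J,K}) ∈ P̃•(S)`.  The unordered pair `{J,K}` is represented by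
its member whose minimum equals the minimum of `J ∪ K`. -/

abbrev EIdx (S : Finset ℕ) : Type := {J : Finset ℕ // J ⊆ S ∧ J.min = S.min}

abbrev DIdx (S : Finset ℕ) : Type :=
  {p : Finset ℕ × Finset ℕ //
    p.1 ⊆ S ∧ p.2 ⊆ S \ p.1 ∧ 1 ≤ p.1.card ∧ 2 ≤ (S \ p.1).card ∧ p.2.min = (S \ p.1).min}

/-- The polynomial ring `R_{0,S}`. -/
abbrev RRing (R : Type) [CommRing R] (S : Finset ℕ) : Type :=
  MvPolynomial (EIdx S ⊕ DIdx S) R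

def reXe (R : Type) [CommRing R] (S J : Finset ℕ) : RRing R S :=
  if h : J ⊆ S ∧ J.min = S.min then X (Sum.inl ⟨J, h⟩) else 0

/-- The variable `ℝE_{J,K}` of `R_{0,S}` (equal to `0` if `{J,K} ∉ P(S)`). -/
def reE (R : Type) [CommRing R] (S J K : Finset ℕ) : RRing R S :=
  if Disjoint J K ∧ J ∪ K = S then (if J.min ≤ K.min then reXe R S J else reXe R S K)
  else 0

def reXd (R : Type) [CommRing R] (S I J : Finset ℕ) : RRing R S :=
  if h : I ⊆ S ∧ J ⊆ S \ I ∧ 1 ≤ I.card ∧ 2 ≤ (S \ I).card ∧ J.min = (S \ I).min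
  then X (Sum.inr ⟨(I, J), h⟩) else 0

/-- The variable `ℝD_{I;J,K}` of `R_{0,S}` (equal to `0` if `(I,{J,K}) ∉ P̃•(S)`). -/
def reD (R : Type) [CommRing R] (S I J K : Finset ℕ) : RRing R S :=
  if Disjoint I (J ∪ K) ∧ Disjoint J K ∧ I ∪ (J ∪ K) = S then
    (if J.min ≤ K.min then reXd R S I J else reXd R S I K)
  else 0

/-- The sign `ε_{J,K}`: `1` if `min (J ∪ K) ∈ J` and `-1` otherwise. -/
def epsm (J K : Finset ℕ) : ℤ := if J.min ≤ K.min then 1 else -1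

/-- `{J,K} ⪯ {J',K'}`. -/
abbrev preceq (J K J' K' : Finset ℕ) : Prop := (J ⊆ J' ∧ K ⊆ K') ∨ (J ⊆ K' ∧ K ⊆ J')

/-- `{J,K} ∈ P(S)`. -/
abbrev validE (S J K : Finset ℕ) : Prop := Disjoint J K ∧ J ∪ K = S

/-- `(I,{J,K}) ∈ P̃•(S)`. -/
abbrev validD (S I J K : Finset ℕ) : Prop :=
  Disjoint I (J ∪ K) ∧ Disjoint J K ∧ I ∪ (J ∪ K) = S ∧ 1 ≤ I.card ∧ 2 ≤ (J ∪ K).card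

/-- The element `E^S_{abc}`. -/
def relE (R : Type) [CommRing R] (S : Finset ℕ) (a b c : ℕ) : RRing R S :=
  (∑ I ∈ S.powerset, ∑ J ∈ (S \ I).powerset,
    if 1 ≤ I.card ∧ 2 ≤ (S \ I).card ∧ a ∈ J ∧ b ∈ J ∧ c ∈ I
    then epsm J ((S \ I) \ J) • reD R S I J ((S \ I) \ J) else 0)
  - (∑ I ∈ S.powerset, ∑ J ∈ (S \ I).powerset,
    if 1 ≤ I.card ∧ 2 ≤ (S \ I).card ∧ a ∈ J ∧ c ∈ J ∧ b ∈ I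
    then epsm J ((S \ I) \ J) • reD R S I J ((S \ I) \ J) else 0)
  - ∑ I ∈ S.powerset, ∑ J ∈ (S \ I).powerset,
    if 1 ≤ I.card ∧ 2 ≤ (S \ I).card ∧ a ∈ I ∧ b ∈ J ∧ c ∈ (S \ I) \ J
    then epsm J ((S \ I) \ J) • reD R S I J ((S \ I) \ J) else 0

/-- The element `Σ_{{J,K} ∈ P(S)} ℝE_{J,K}`. -/
def relEsum (R : Type) [CommRing R] (S : Finset ℕ) : RRing R S :=
  ∑ J ∈ S.powerset.filter (fun J => J.min = S.min), reE R S J (S \ J)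

/-- The ideal `I_{0,S} ⊂ R_{0,S}`. -/
def reIdeal (R : Type) [CommRing R] (S : Finset ℕ) : Ideal (RRing R S) :=
  Ideal.span (
    {x | ∃ J K J' K' : Finset ℕ, validE S J K ∧ validE S J' K' ∧
      x = reE R S J K * reE R S J' K'} ∪
    {x | ∃ J K I' J' K' : Finset ℕ, validE S J K ∧ validD S I' J' K' ∧
      ¬ preceq J' K' J K ∧ x = reE R S J K * reD R S I' J' K'} ∪
    {x | ∃ I J K I' J' K' : Finset ℕ, validD S I J K ∧ validD S I' J' K' ∧
      ¬ preceq J K J' K' ∧ ¬ preceq J' K' J K ∧ ¬ J ∪ K ⊆ I' ∧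
      x = reD R S I J K * reD R S I' J' K'} ∪
    {relEsum R S} ∪
    {x | ∃ a b c : ℕ, a ∈ S ∧ b ∈ S ∧ c ∈ S ∧ a ≠ b ∧ a ≠ c ∧ b ≠ c ∧
      x = relE R S a b c})

/-- The element `G_{abc}` of Remark `RcM04rel_e2b2`. -/
def relG (R : Type) [CommRing R] (S : Finset ℕ) (a b c : ℕ) : RRing R S :=
  (∑ I ∈ S.powerset, ∑ J ∈ (S \ I).powerset,
    if 1 ≤ I.card ∧ 2 ≤ (S \ I).card ∧ a ∈ J ∧ b ∉ I ∧ c ∈ I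
    then epsm J ((S \ I) \ J) • reD R S I J ((S \ I) \ J) else 0)
  - ∑ I ∈ S.powerset, ∑ J ∈ (S \ I).powerset,
    if 1 ≤ I.card ∧ 2 ≤ (S \ I).card ∧ a ∈ J ∧ b ∈ I ∧ c ∉ I
    then epsm J ((S \ I) \ J) • reD R S I J ((S \ I) \ J) else 0

/-- The homomorphism `F : R_{0,[ℓ]} → R_{0,[ℓ+1]}`. -/
def Fre (R : Type) [CommRing R] (ℓ : ℕ) : RRing R (Iset ℓ) →ₐ[R] RRing R (Iset (ℓ + 1)) :=
  aeval fun ix =>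
    match ix with
    | Sum.inl e =>
        reE R (Iset (ℓ + 1)) (e.1 ∪ {ℓ + 1}) (Iset ℓ \ e.1)
        + reE R (Iset (ℓ + 1)) e.1 ((Iset ℓ \ e.1) ∪ {ℓ + 1})
    | Sum.inr d =>
        reD R (Iset (ℓ + 1)) (d.1.1 ∪ {ℓ + 1}) d.1.2 ((Iset ℓ \ d.1.1) \ d.1.2)
        + reD R (Iset (ℓ + 1)) d.1.1 (d.1.2 ∪ {ℓ + 1}) ((Iset ℓ \ d.1.1) \ d.1.2)
        + reD R (Iset (ℓ + 1)) d.1.1 d.1.2 (((Iset ℓ \ d.1.1) \ d.1.2) ∪ {ℓ + 1})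

/-- `ℝẼ⁰_{J,K} = ℝD_{{ℓ+1};J,K} ∈ R_{0,[ℓ+1]}`. -/
def reEt0 (R : Type) [CommRing R] (ℓ : ℕ) (J K : Finset ℕ) : RRing R (Iset (ℓ + 1)) :=
  reD R (Iset (ℓ + 1)) {ℓ + 1} J K

/-- `ℝẼ⁻_{J,K} = ℝE_{J,K∪{ℓ+1}} ∈ R_{0,[ℓ+1]}`. -/
def reEtm (R : Type) [CommRing R] (ℓ : ℕ) (J K : Finset ℕ) : RRing R (Iset (ℓ + 1)) :=
  reE R (Iset (ℓ + 1)) J (K ∪ {ℓ + 1})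

/-- `ℝD̃⁰_{I;J,K} ∈ R_{0,[ℓ+1]}` (for `(I,{J,K})` written with `min (J∪K) ∈ J`). -/
def reDt0 (R : Type) [CommRing R] (ℓ : ℕ) (I J K : Finset ℕ) : RRing R (Iset (ℓ + 1)) :=
  if 1 ∈ I then reD R (Iset (ℓ + 1)) I (J ∪ {ℓ + 1}) K
  else reD R (Iset (ℓ + 1)) (I ∪ {ℓ + 1}) J K

/-- `ℝD̃⁻_{I;J,K} = ℝD_{I;J,K∪{ℓ+1}} ∈ R_{0,[ℓ+1]}`. -/
def reDtm (R : Type) [CommRing R] (ℓ : ℕ) (I J K : Finset ℕ) : RRing R (Iset (ℓ + 1)) :=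
  reD R (Iset (ℓ + 1)) I J (K ∪ {ℓ + 1})

/-- The homomorphism `F_{J,K} : R^{cx}_{{nd}⊔[ℓ]} → R_{0,[ℓ]}`,
`D_{J',K'} ↦ (-1)^{|K|} ε_{J∩K',K∩K'} ℝD_{J'-{nd};J∩K',K∩K'}` for `nd ∈ J'`; here `nd = 0`. -/
def FJKre (R : Type) [CommRing R] (ℓ : ℕ) (J K : Finset ℕ) :
    CxRing R (insert 0 (Iset ℓ)) →ₐ[R] RRing R (Iset ℓ) :=
  aeval fun i =>
    ((-1 : ℤ) ^ K.card *
        epsm (J ∩ (insert 0 (Iset ℓ) \ i.1)) (K ∩ (insert 0 (Iset ℓ) \ i.1))) •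
      reD R (Iset ℓ) (i.1.erase 0)
        (J ∩ (insert 0 (Iset ℓ) \ i.1)) (K ∩ (insert 0 (Iset ℓ) \ i.1))

/-- The homomorphism `F²_{I;J,K} : R^{cx}_{{nd}⊔(J∪K)} → R_{0,[ℓ]}`,
`D_{J',K'} ↦ (-1)^{|K|} ε_{J∩K',K∩K'} ℝD_{I∪(J'-{nd});J∩K',K∩K'}` for `nd ∈ J'`;
here `nd = 0`. -/
def F2IJK (R : Type) [CommRing R] (ℓ : ℕ) (I J K : Finset ℕ) :
    CxRing R (insert 0 (J ∪ K)) →ₐ[R] RRing R (Iset ℓ) :=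
  aeval fun i =>
    ((-1 : ℤ) ^ K.card *
        epsm (J ∩ (insert 0 (J ∪ K) \ i.1)) (K ∩ (insert 0 (J ∪ K) \ i.1))) •
      reD R (Iset ℓ) (I ∪ i.1.erase 0)
        (J ∩ (insert 0 (J ∪ K) \ i.1)) (K ∩ (insert 0 (J ∪ K) \ i.1))

/-- `nd` for `{nd} ⊔ I`, identified with `min (ℤ⁺ - I)`. -/
def ndOf (I : Finset ℕ) : ℕ := sInf {n : ℕ | 0 < n ∧ n ∉ I}

/-- The homomorphism `F¹_{I;J,K} : R_{0,{nd}⊔I} → R_{0,[ℓ]}` with `nd = min (ℤ⁺ - I)`. -/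
def F1IJK (R : Type) [CommRing R] (ℓ : ℕ) (I J K : Finset ℕ) :
    RRing R (insert (ndOf I) I) →ₐ[R] RRing R (Iset ℓ) :=
  aeval fun ix =>
    match ix with
    | Sum.inl e =>
        if ndOf I ∈ e.1 then
          reE R (Iset ℓ) (J ∪ e.1.erase (ndOf I)) (K ∪ (insert (ndOf I) I \ e.1))
        else
          reE R (Iset ℓ) (J ∪ (insert (ndOf I) I \ e.1).erase (ndOf I)) (K ∪ e.1)
    | Sum.inr d =>
        if ndOf I ∈ d.1.1 then
          reD R (Iset ℓ) (d.1.1.erase (ndOf I) ∪ J ∪ K) d.1.2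
            ((insert (ndOf I) I \ d.1.1) \ d.1.2)
        else if ndOf I ∈ d.1.2 then
          reD R (Iset ℓ) d.1.1 (J ∪ d.1.2.erase (ndOf I))
            (K ∪ ((insert (ndOf I) I \ d.1.1) \ d.1.2))
        else
          reD R (Iset ℓ) d.1.1
            (J ∪ ((insert (ndOf I) I \ d.1.1) \ d.1.2).erase (ndOf I)) (K ∪ d.1.2)

/-- The homomorphism `F_{I;J,K} : R_{0,{nd}⊔I} ⊗ R^{cx}_{{nd}⊔(J∪K)} → R_{0,[ℓ]}`
induced by `F¹_{I;J,K}` and `F²_{I;J,K}`. -/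
def FIJK (R : Type) [CommRing R] (ℓ : ℕ) (I J K : Finset ℕ) :
    TensorProduct R (RRing R (insert (ndOf I) I)) (CxRing R (insert 0 (J ∪ K))) →ₐ[R]
      RRing R (Iset ℓ) :=
  Algebra.TensorProduct.productMap (F1IJK R ℓ I J K) (F2IJK R ℓ I J K)


/-! ### Auxiliary lemmas for `stmt2` -/

lemma cxD_eq_X (S A : Finset ℕ)
    (h : A ⊆ S ∧ 2 ≤ A.card ∧ 2 ≤ (S \ A).card ∧ A.min = S.min)
    (hle : A.min ≤ (S \ A).min) :
    cxD ℤ S A (S \ A) = X ⟨A, h⟩ := by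
  rw [cxD, if_pos ⟨Finset.disjoint_sdiff, Finset.union_sdiff_of_subset h.1⟩, if_pos hle,
    cxXv, dif_pos h]

lemma min_eq_zero_of_mem {A : Finset ℕ} (h : 0 ∈ A) : A.min = 0 :=
  le_antisymm (Finset.min_le h) zero_le

lemma sum_powerset_union {M : Type*} [AddCommMonoid M] {S J K : Finset ℕ}
    (hd : Disjoint J K) (hu : J ∪ K = S) (f : Finset ℕ → M)
    (hf : ∀ A ∈ S.powerset, ¬ J ⊆ A → f A = 0) :
    ∑ A ∈ S.powerset, f A = ∑ B ∈ K.powerset, f (J ∪ B) := by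
  classical
  rw [← Finset.sum_filter_of_ne (p := fun A => J ⊆ A)
    (fun A hA h => by by_contra hn; exact h (hf A hA hn))]
  refine Finset.sum_bij' (fun A _ => A \ J) (fun B _ => J ∪ B) ?_ ?_ ?_ ?_ ?_
  · intro A hA
    simp only [Finset.mem_filter, Finset.mem_powerset] at hA ⊢
    rw [← hu] at hA
    exact fun x hx => by
      have := hA.1 (Finset.mem_sdiff.mp hx).1
      rcases Finset.mem_union.mp this with h | h
      · exact absurd h (Finset.mem_sdiff.mp hx).2
      · exact h
  · intro B hB
    simp only [Finset.mem_filter, Finset.mem_powerset] at hB ⊢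
    exact ⟨by rw [← hu]; exact Finset.union_subset_union_right hB, Finset.subset_union_left⟩
  · intro A hA
    simp only [Finset.mem_filter] at hA
    exact Finset.union_sdiff_of_subset hA.2
  · intro B hB
    simp only [Finset.mem_powerset] at hB
    exact Finset.union_sdiff_cancel_left (hd.mono_right hB)
  · intro A hA
    simp only [Finset.mem_filter] at hA
    rw [Finset.union_sdiff_of_subset hA.2]

lemma sumCx (ℓ : ℕ) (J K : Finset ℕ)
    (hdisj : Disjoint J K) (hun : J ∪ K = Iset ℓ) (hJ : 2 ≤ J.card)
    (a x y z : ℕ) (haJ : a ∈ J) (hx : x ∈ K) (hy : y ∈ K) (hz : z ∈ K) (hyz : y ≠ z) :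
    FJcx ℤ ℓ J K (∑ A ∈ (insert 0 K).powerset,
      if 2 ≤ A.card ∧ 2 ≤ (insert 0 K \ A).card ∧ 0 ∈ A ∧ x ∈ A ∧
         y ∈ insert 0 K \ A ∧ z ∈ insert 0 K \ A
      then cxD ℤ (insert 0 K) A (insert 0 K \ A) else 0) =
    ∑ J' ∈ (Iset ℓ).powerset,
      if 2 ≤ J'.card ∧ 2 ≤ (Iset ℓ \ J').card ∧ a ∈ J' ∧ x ∈ J' ∧
         y ∈ Iset ℓ \ J' ∧ z ∈ Iset ℓ \ J' ∧ J ⊆ J'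
      then cxD ℤ (Iset ℓ) J' (Iset ℓ \ J') else 0 := by
  classical
  have hKS : K ⊆ Iset ℓ := hun ▸ Finset.subset_union_right
  have h0 : ∀ n ∈ K, n ≠ 0 := fun n hn =>
    Nat.one_le_iff_ne_zero.mp (Finset.mem_Icc.mp (hKS hn)).1
  have h0K : 0 ∉ K := fun h => h0 0 h rfl
  have hKJ : ∀ n, n ∈ K → n ∉ J := fun n hn => Finset.disjoint_right.mp hdisj hn
  rw [map_sum]
  rw [sum_powerset_union (S := insert 0 K) (J := {0}) (K := K)
      (by simp [Finset.disjoint_singleton_left, h0K]) (by rw [← Finset.insert_eq])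
      _ (fun A _ hnA => by
        rw [if_neg fun h => hnA (Finset.singleton_subset_iff.mpr h.2.2.1), map_zero])]
  rw [sum_powerset_union (S := Iset ℓ) hdisj hun _ (fun A _ hnA => by
        rw [if_neg fun h => hnA h.2.2.2.2.2.2])]
  refine Finset.sum_congr rfl fun B hB => ?_
  rw [Finset.mem_powerset] at hB
  have h0B : 0 ∉ B := fun h => h0K (hB h)
  rw [← Finset.insert_eq]
  have hTdiff : insert 0 K \ insert 0 B = K \ B := by
    ext n
    simp only [Finset.mem_sdiff, Finset.mem_insert]
    constructor
    · rintro ⟨h1 | h1, h2⟩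
      · exact absurd (Or.inl h1) h2
      · exact ⟨h1, fun hn => h2 (Or.inr hn)⟩
    · rintro ⟨h1, h2⟩
      exact ⟨Or.inr h1, by rintro (rfl | hn); exacts [h0K h1, h2 hn]⟩
  have hKdiff : K \ B = Iset ℓ \ (J ∪ B) := by
    ext n
    simp only [Finset.mem_sdiff, Finset.mem_union, ← hun]
    constructor
    · rintro ⟨h1, h2⟩
      exact ⟨Or.inr h1, by rintro (hn | hn); exacts [hKJ n h1 hn, h2 hn]⟩
    · rintro ⟨h1 | h1, h2⟩
      · exact absurd (Or.inl h1) h2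
      · exact ⟨h1, fun hn => h2 (Or.inr hn)⟩
  by_cases hs : x ∈ B ∧ y ∉ B ∧ z ∉ B
  · obtain ⟨hxB, hyB, hzB⟩ := hs
    have hyT : y ∈ insert 0 K \ insert 0 B := by
      rw [hTdiff]; exact Finset.mem_sdiff.mpr ⟨hy, hyB⟩
    have hzT : z ∈ insert 0 K \ insert 0 B := by
      rw [hTdiff]; exact Finset.mem_sdiff.mpr ⟨hz, hzB⟩
    have hcard1 : 2 ≤ (insert 0 B).card :=
      Finset.one_lt_card.mpr ⟨0, Finset.mem_insert_self 0 B, x,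
        Finset.mem_insert_of_mem hxB, fun h => h0 x hx h.symm⟩
    have hcard2 : 2 ≤ (insert 0 K \ insert 0 B).card :=
      Finset.one_lt_card.mpr ⟨y, hyT, z, hzT, hyz⟩
    have hAmin : (insert 0 B).min = (insert 0 K).min := by
      rw [min_eq_zero_of_mem (Finset.mem_insert_self 0 B),
        min_eq_zero_of_mem (Finset.mem_insert_self 0 K)]
    have hidx : insert 0 B ⊆ insert 0 K ∧ 2 ≤ (insert 0 B).card ∧
        2 ≤ (insert 0 K \ insert 0 B).card ∧ (insert 0 B).min = (insert 0 K).min :=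
      ⟨Finset.insert_subset_insert 0 hB, hcard1, hcard2, hAmin⟩
    rw [if_pos ⟨hcard1, hcard2, Finset.mem_insert_self 0 B,
        Finset.mem_insert_of_mem hxB, hyT, hzT⟩,
      cxD_eq_X _ _ hidx (by
        rw [min_eq_zero_of_mem (Finset.mem_insert_self 0 B)]; exact zero_le)]
    simp only [FJcx, aeval_X]
    rw [Finset.erase_insert h0B, hTdiff, hKdiff]
    have hySl : y ∈ Iset ℓ \ (J ∪ B) := by
      rw [← hKdiff]; exact Finset.mem_sdiff.mpr ⟨hy, hyB⟩
    have hzSl : z ∈ Iset ℓ \ (J ∪ B) := by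
      rw [← hKdiff]; exact Finset.mem_sdiff.mpr ⟨hz, hzB⟩
    rw [if_pos ⟨le_trans hJ (Finset.card_le_card Finset.subset_union_left),
      by rw [← hKdiff]; exact Finset.one_lt_card.mpr ⟨y, Finset.mem_sdiff.mpr ⟨hy, hyB⟩, z,
        Finset.mem_sdiff.mpr ⟨hz, hzB⟩, hyz⟩,
      Finset.mem_union.mpr (Or.inl haJ), Finset.mem_union.mpr (Or.inr hxB),
      hySl, hzSl, Finset.subset_union_left⟩]
  · rw [if_neg fun h => hs ⟨(Finset.mem_insert.mp h.2.2.2.1).resolve_left (h0 x hx),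
        fun hyB => (Finset.mem_sdiff.mp h.2.2.2.2.1).2 (Finset.mem_insert_of_mem hyB),
        fun hzB => (Finset.mem_sdiff.mp h.2.2.2.2.2).2 (Finset.mem_insert_of_mem hzB)⟩,
      map_zero,
      if_neg fun h => hs ⟨(Finset.mem_union.mp h.2.2.2.1).resolve_left (hKJ x hx),
        fun hyB => (Finset.mem_sdiff.mp h.2.2.2.2.1).2 (Finset.mem_union.mpr (Or.inr hyB)),
        fun hzB => (Finset.mem_sdiff.mp h.2.2.2.2.2.1).2 (Finset.mem_union.mpr (Or.inr hzB))⟩]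

lemma sumRe (ℓ : ℕ) (J K : Finset ℕ)
    (hdisj : Disjoint J K)
    (a x y : ℕ) (z : ℕ) (haJ : a ∈ J) (hx : x ∈ K) (hy : y ∈ K) :
    ∑ J' ∈ (Iset ℓ).powerset,
      (if 2 ≤ J'.card ∧ 2 ≤ (Iset ℓ \ J').card ∧ a ∈ J' ∧ x ∈ J' ∧
         y ∈ Iset ℓ \ J' ∧ z ∈ Iset ℓ \ J'
      then cxD ℤ (Iset ℓ) J' (Iset ℓ \ J') else 0) =
    (∑ J' ∈ (Iset ℓ).powerset,
      if 2 ≤ J'.card ∧ 2 ≤ (Iset ℓ \ J').card ∧ a ∈ J' ∧ x ∈ J' ∧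
         y ∈ Iset ℓ \ J' ∧ z ∈ Iset ℓ \ J' ∧ J ⊆ J'
      then cxD ℤ (Iset ℓ) J' (Iset ℓ \ J') else 0)
    + ∑ J' ∈ (Iset ℓ).powerset,
      if 2 ≤ J'.card ∧ 2 ≤ (Iset ℓ \ J').card ∧ a ∈ J' ∧ x ∈ J' ∧
         y ∈ Iset ℓ \ J' ∧ z ∈ Iset ℓ \ J' ∧ NcapCx J J' (Iset ℓ \ J')
      then cxD ℤ (Iset ℓ) J' (Iset ℓ \ J') else 0 := by
  classical
  have hKJ : ∀ n, n ∈ K → n ∉ J := fun n hn => Finset.disjoint_right.mp hdisj hn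
  rw [← Finset.sum_add_distrib]
  refine Finset.sum_congr rfl fun J' _ => ?_
  by_cases h1 : 2 ≤ J'.card ∧ 2 ≤ (Iset ℓ \ J').card ∧ a ∈ J' ∧ x ∈ J' ∧
      y ∈ Iset ℓ \ J' ∧ z ∈ Iset ℓ \ J'
  · obtain ⟨p1, p2, p3, p4, p5, p6⟩ := h1
    by_cases h2 : J ⊆ J'
    · rw [if_pos ⟨p1, p2, p3, p4, p5, p6⟩, if_pos ⟨p1, p2, p3, p4, p5, p6, h2⟩,
        if_neg fun h => h.2.2.2.2.2.2.1 h2, add_zero]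
    · have hN : NcapCx J J' (Iset ℓ \ J') :=
        ⟨h2, fun hsub => (Finset.mem_sdiff.mp (hsub haJ)).2 p3,
         fun hsub => hKJ x hx (hsub p4),
         fun hsub => hKJ y hy (hsub p5)⟩
      rw [if_pos ⟨p1, p2, p3, p4, p5, p6⟩, if_neg fun h => h2 h.2.2.2.2.2.2,
        if_pos ⟨p1, p2, p3, p4, p5, p6, hN⟩, zero_add]
  · rw [if_neg h1,
      if_neg fun h => h1 ⟨h.1, h.2.1, h.2.2.1, h.2.2.2.1, h.2.2.2.2.1, h.2.2.2.2.2.1⟩,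
      if_neg fun h => h1 ⟨h.1, h.2.1, h.2.2.1, h.2.2.2.1, h.2.2.2.2.1, h.2.2.2.2.2.1⟩,
      add_zero]

/-- The identity for `F_J(R^{{nd}⊔K}_{(nd)bcd}) − R^{[ℓ]}_{abcd}` in `R_{[ℓ]}`. -/
theorem stmt2 (ℓ : ℕ) (hℓ : 3 ≤ ℓ) (J K : Finset ℕ)
    (hdisj : Disjoint J K) (hun : J ∪ K = Iset ℓ) (hJ : 2 ≤ J.card) (hK : 2 ≤ K.card)
    (a b c d : ℕ) (haJ : a ∈ J) (hbK : b ∈ K) (hcK : c ∈ K) (hdK : d ∈ K)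
    (hbc : b ≠ c) (hbd : b ≠ d) (hcd : c ≠ d) :
    FJcx ℤ ℓ J K (cxRel ℤ (insert 0 K) 0 b c d) - cxRel ℤ (Iset ℓ) a b c d =
      -(∑ J' ∈ (Iset ℓ).powerset,
          if 2 ≤ J'.card ∧ 2 ≤ (Iset ℓ \ J').card ∧
             a ∈ J' ∧ b ∈ J' ∧ c ∈ Iset ℓ \ J' ∧ d ∈ Iset ℓ \ J' ∧
             NcapCx J J' (Iset ℓ \ J')
          then cxD ℤ (Iset ℓ) J' (Iset ℓ \ J') else 0)
      + ∑ J' ∈ (Iset ℓ).powerset,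
          if 2 ≤ J'.card ∧ 2 ≤ (Iset ℓ \ J').card ∧
             a ∈ J' ∧ c ∈ J' ∧ b ∈ Iset ℓ \ J' ∧ d ∈ Iset ℓ \ J' ∧
             NcapCx J J' (Iset ℓ \ J')
          then cxD ℤ (Iset ℓ) J' (Iset ℓ \ J') else 0 := by
  classical
  simp only [cxRel, map_sub]
  rw [sumCx ℓ J K hdisj hun hJ a b c d haJ hbK hcK hdK hcd,
    sumCx ℓ J K hdisj hun hJ a c b d haJ hcK hbK hdK hbd,
    sumRe ℓ J K hdisj a b c d haJ hbK hcK,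
    sumRe ℓ J K hdisj a c b d haJ hcK hbK]
  ring

end
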